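/- arXiv:1806.03108 — 5 statements merged into one kernel-verified Lean document; each statement's English description precedes it below -/
import Mathlib

section
/- Fix n ≥ 1 and let S = {1,…,n} × {1,…,n}. Let (X_m)_{m∈ℕ} be an adapted S-valued process such that for every m and almost every ω, writing X_m(ω) = (i, j), every state s' = (i', j') ∈ S with |i − i'| ≤ 1 and |j − j'| ≤ 1 satisfies μ[X_{m+1} = s' | ℱ_m](ω) ≥ 1/36. Then for every state s ∈ S, almost surely X_m = s for infinitely many m. -/
open MeasureTheory Filter

private lemma stmt3_move {n d : ℕ} (a t : Fin n)
    (h : |(a.val : ℤ) - (t.val : ℤ)| ≤ (d : ℤ) + 1) :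
    ∃ a' : Fin n, |(a.val : ℤ) - (a'.val : ℤ)| ≤ 1 ∧ |(a'.val : ℤ) - (t.val : ℤ)| ≤ (d : ℤ) := by
  have ha := a.isLt
  have ht := t.isLt
  rcases lt_trichotomy a.val t.val with hlt | heq | hgt
  · refine ⟨⟨a.val + 1, by omega⟩, ?_, ?_⟩ <;>
      · rw [abs_le] at h ⊢; simp only [Fin.val_mk]; omega
  · refine ⟨a, ?_, ?_⟩ <;> · rw [abs_le] at h ⊢; omega
  · refine ⟨⟨a.val - 1, by omega⟩, ?_, ?_⟩ <;>
      · rw [abs_le] at h ⊢; simp only [Fin.val_mk]; omega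

private lemma stmt3_step {Ω : Type*} {m : MeasurableSpace Ω} (μ : Measure Ω)
    [IsProbabilityMeasure μ]
    (ℱ : Filtration ℕ m) (n : ℕ) (X : ℕ → Ω → Fin n × Fin n)
    (hadapted : ∀ k : ℕ, Measurable[ℱ k] (X k))
    (hstep : ∀ k : ℕ, ∀ᵐ ω ∂μ, ∀ s' : Fin n × Fin n,
      |((X k ω).1.val : ℤ) - (s'.1.val : ℤ)| ≤ 1 →
      |((X k ω).2.val : ℤ) - (s'.2.val : ℤ)| ≤ 1 →
      (1 / 36 : ℝ) ≤ (μ[{ω' | X (k + 1) ω' = s'}.indicator (fun _ => (1 : ℝ)) | ℱ k]) ω)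
    (s : Fin n × Fin n) (d : ℕ)
    (hprev : ∀ᵐ ω ∂μ, ∃ᶠ k in atTop,
      |((X k ω).1.val : ℤ) - (s.1.val : ℤ)| ≤ (d : ℤ) + 1 ∧
      |((X k ω).2.val : ℤ) - (s.2.val : ℤ)| ≤ (d : ℤ) + 1) :
    ∀ᵐ ω ∂μ, ∃ᶠ k in atTop,
      |((X k ω).1.val : ℤ) - (s.1.val : ℤ)| ≤ (d : ℤ) ∧
      |((X k ω).2.val : ℤ) - (s.2.val : ℤ)| ≤ (d : ℤ) := by
  set A : ℕ → Set Ω := fun k => {ω | |((X k ω).1.val : ℤ) - (s.1.val : ℤ)| ≤ (d : ℤ) ∧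
      |((X k ω).2.val : ℤ) - (s.2.val : ℤ)| ≤ (d : ℤ)} with hA
  have hmeasA : ∀ k, MeasurableSet[ℱ k] (A k) := by
    intro k
    have : A k = X k ⁻¹' {t : Fin n × Fin n | |(t.1.val : ℤ) - (s.1.val : ℤ)| ≤ (d : ℤ) ∧
        |(t.2.val : ℤ) - (s.2.val : ℤ)| ≤ (d : ℤ)} := rfl
    rw [this]
    exact hadapted k (Set.toFinite _).measurableSet
  have hBC := ae_mem_limsup_atTop_iff (ℱ := ℱ) μ hmeasA
  have hintA : ∀ k, Integrable ((A (k + 1)).indicator (fun _ => (1 : ℝ))) μ := fun k =>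
    (integrable_const (1 : ℝ)).indicator (ℱ.le _ _ (hmeasA (k + 1)))
  have hintB : ∀ (k : ℕ) (t' : Fin n × Fin n),
      Integrable ({ω' | X (k + 1) ω' = t'}.indicator (fun _ => (1 : ℝ))) μ := by
    intro k t'
    have hmB : MeasurableSet[ℱ (k + 1)] {ω' | X (k + 1) ω' = t'} := by
      have : {ω' | X (k + 1) ω' = t'} = X (k + 1) ⁻¹' {t'} := rfl
      rw [this]
      exact hadapted (k + 1) (Set.toFinite _).measurableSet
    exact (integrable_const (1 : ℝ)).indicator (ℱ.le _ _ hmB)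
  have hmono : ∀ᵐ ω ∂μ, ∀ (k : ℕ) (t' : Fin n × Fin n),
      (|(t'.1.val : ℤ) - (s.1.val : ℤ)| ≤ (d : ℤ) ∧ |(t'.2.val : ℤ) - (s.2.val : ℤ)| ≤ (d : ℤ)) →
      (μ[{ω' | X (k + 1) ω' = t'}.indicator (fun _ => (1 : ℝ)) | ℱ k]) ω ≤
        (μ[(A (k + 1)).indicator (fun _ => (1 : ℝ)) | ℱ k]) ω := by
    rw [ae_all_iff]; intro k
    rw [ae_all_iff]; intro t'
    by_cases ht : |(t'.1.val : ℤ) - (s.1.val : ℤ)| ≤ (d : ℤ) ∧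
        |(t'.2.val : ℤ) - (s.2.val : ℤ)| ≤ (d : ℤ)
    · have hsub : {ω' | X (k + 1) ω' = t'} ⊆ A (k + 1) := by
        intro ω' hω'
        have hω'' : X (k + 1) ω' = t' := hω'
        simp only [hA, Set.mem_setOf_eq, hω'']
        exact ht
      have hle : ({ω' | X (k + 1) ω' = t'}.indicator (fun _ => (1 : ℝ))) ≤ᵐ[μ]
          ((A (k + 1)).indicator (fun _ => (1 : ℝ))) :=
        Eventually.of_forall (Set.indicator_le_indicator_of_subset hsub (fun _ => zero_le_one))
      exact (condExp_mono (hintB k t') (hintA k) hle).mono fun ω h _ => h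
    · exact Eventually.of_forall fun ω hc => absurd hc ht
  have hnn : ∀ᵐ ω ∂μ, ∀ k : ℕ, 0 ≤ (μ[(A (k + 1)).indicator (fun _ => (1 : ℝ)) | ℱ k]) ω := by
    rw [ae_all_iff]; intro k
    exact condExp_nonneg (Eventually.of_forall fun ω =>
      Set.indicator_nonneg (fun _ _ => zero_le_one) ω)
  have hstep' : ∀ᵐ ω ∂μ, ∀ k : ℕ, ∀ s' : Fin n × Fin n,
      |((X k ω).1.val : ℤ) - (s'.1.val : ℤ)| ≤ 1 →
      |((X k ω).2.val : ℤ) - (s'.2.val : ℤ)| ≤ 1 →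
      (1 / 36 : ℝ) ≤ (μ[{ω' | X (k + 1) ω' = s'}.indicator (fun _ => (1 : ℝ)) | ℱ k]) ω :=
    ae_all_iff.2 hstep
  filter_upwards [hprev, hBC, hmono, hnn, hstep'] with ω hfreq hiff hm hn0 hs
  set f : ℕ → ℝ := fun k => (μ[(A (k + 1)).indicator (fun _ => (1 : ℝ)) | ℱ k]) ω with hf
  have hlow : ∀ k : ℕ, (|((X k ω).1.val : ℤ) - (s.1.val : ℤ)| ≤ (d : ℤ) + 1 ∧
      |((X k ω).2.val : ℤ) - (s.2.val : ℤ)| ≤ (d : ℤ) + 1) → (1 / 36 : ℝ) ≤ f k := by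
    intro k hk
    obtain ⟨a', ha1, ha2⟩ := stmt3_move (X k ω).1 s.1 hk.1
    obtain ⟨b', hb1, hb2⟩ := stmt3_move (X k ω).2 s.2 hk.2
    exact le_trans (hs k (a', b') ha1 hb1) (hm k (a', b') ⟨ha2, hb2⟩)
  have hmonoSum : Monotone fun N => ∑ k ∈ Finset.range N, f k := by
    intro a b hab
    exact Finset.sum_le_sum_of_subset_of_nonneg (Finset.range_subset_range.2 hab)
      (fun i _ _ => hn0 i)
  have hclaim : ∀ j : ℕ, ∃ N, (j : ℝ) / 36 ≤ ∑ k ∈ Finset.range N, f k := by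
    intro j
    induction j with
    | zero => exact ⟨0, by simp⟩
    | succ j ih =>
      obtain ⟨N, hN⟩ := ih
      obtain ⟨k, hkN, hk⟩ := (frequently_atTop.1 hfreq) N
      refine ⟨k + 1, ?_⟩
      have h1 : (1 / 36 : ℝ) ≤ f k := hlow k hk
      have h2 : ∑ i ∈ Finset.range N, f i + f k ≤ ∑ i ∈ Finset.range (k + 1), f i := by
        have hsub : insert k (Finset.range N) ⊆ Finset.range (k + 1) := by
          intro x hx
          simp only [Finset.mem_insert, Finset.mem_range] at hx ⊢
          rcases hx with rfl | hx
          · omega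
          · omega
        calc ∑ i ∈ Finset.range N, f i + f k
            = ∑ i ∈ insert k (Finset.range N), f i := by
              rw [Finset.sum_insert (by simp only [Finset.mem_range]; omega)]; ring
          _ ≤ ∑ i ∈ Finset.range (k + 1), f i :=
              Finset.sum_le_sum_of_subset_of_nonneg hsub (fun i _ _ => hn0 i)
      push_cast
      linarith
  have htend : Tendsto (fun N => ∑ k ∈ Finset.range N, f k) atTop atTop := by
    apply tendsto_atTop_atTop_of_monotone hmonoSum
    intro b
    obtain ⟨N, hN⟩ := hclaim ⌈36 * b⌉₊
    refine ⟨N, le_trans ?_ hN⟩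
    have h1 : (36 : ℝ) * b ≤ (⌈36 * b⌉₊ : ℝ) := Nat.le_ceil _
    linarith
  have hmem : ω ∈ limsup A atTop := hiff.2 htend
  exact mem_limsup_iff_frequently_mem.1 hmem

/-- Ergodicity of the block-withholding pool-attack game: on the state space
`{1,…,n} × {1,…,n}` (modelled as `Fin n × Fin n`), if from any state each state whose
two coordinates differ by at most one is reached with conditional probability at least
`1/36`, then every state is visited infinitely often almost surely. -/
theorem stmt3 {Ω : Type*} {m : MeasurableSpace Ω} (μ : Measure Ω) [IsProbabilityMeasure μ]
    (ℱ : Filtration ℕ m) (n : ℕ) (hn : 1 ≤ n)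
    (X : ℕ → Ω → Fin n × Fin n)
    (hadapted : ∀ k : ℕ, Measurable[ℱ k] (X k))
    (hstep : ∀ k : ℕ, ∀ᵐ ω ∂μ, ∀ s' : Fin n × Fin n,
      |((X k ω).1.val : ℤ) - (s'.1.val : ℤ)| ≤ 1 →
      |((X k ω).2.val : ℤ) - (s'.2.val : ℤ)| ≤ 1 →
      (1 / 36 : ℝ) ≤ (μ[{ω' | X (k + 1) ω' = s'}.indicator (fun _ => (1 : ℝ)) | ℱ k]) ω) :
    ∀ s : Fin n × Fin n, ∀ᵐ ω ∂μ, ∃ᶠ k in atTop, X k ω = s := by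
  intro s
  have main : ∀ j : ℕ, ∀ᵐ ω ∂μ, ∃ᶠ k in atTop,
      |((X k ω).1.val : ℤ) - (s.1.val : ℤ)| ≤ ((n - 1 - j : ℕ) : ℤ) ∧
      |((X k ω).2.val : ℤ) - (s.2.val : ℤ)| ≤ ((n - 1 - j : ℕ) : ℤ) := by
    intro j
    induction j with
    | zero =>
      refine Eventually.of_forall fun ω => Frequently.of_forall fun k => ⟨?_, ?_⟩ <;>
        · rw [abs_le]
          have h1 := (X k ω).1.isLt
          have h2 := (X k ω).2.isLt
          have h3 := s.1.isLt
          have h4 := s.2.isLt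
          omega
    | succ j ih =>
      by_cases h0 : n - 1 - j = 0
      · have heq : n - 1 - (j + 1) = n - 1 - j := by omega
        rw [heq]
        exact ih
      · have heq : ((n - 1 - j : ℕ) : ℤ) = ((n - 1 - (j + 1) : ℕ) : ℤ) + 1 := by omega
        rw [heq] at ih
        exact stmt3_step μ ℱ n X hadapted hstep s (n - 1 - (j + 1)) ih
  have final := main (n - 1)
  have h00 : n - 1 - (n - 1) = 0 := by omega
  rw [h00] at final
  filter_upwards [final] with ω hω
  refine hω.mono fun k hk => ?_
  obtain ⟨h1, h2⟩ := hk
  rw [abs_le] at h1 h2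
  have e1 : (X k ω).1.val = s.1.val := by omega
  have e2 : (X k ω).2.val = s.2.val := by omega
  exact Prod.ext (Fin.ext e1) (Fin.ext e2)
end

section
/- Let α, β, α', β' be real numbers with α + β' > 0, β + α' > 0 and α'·β' < (α + β')·(β + α'), and set D = (α + β')·(β + α') − α'·β'. Then the unique pair (r_A, r_B) satisfying r_A = (α − α') + α'·(r_B/(β + α')) and r_B = (β − β') + β'·(r_A/(α + β')) is given explicitly by r_A = ((α − α')·(β + α') + α'·(β − β'))·(α + β')/D and r_B = ((β − β')·(α + β') + β'·(α − α'))·(β + α')/D. -/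
/-- Explicit formula for the unique pair of revenues `(r_A, r_B)` in the
block-withholding attack model. -/
theorem stmt5 (α β α' β' : ℝ) (h1 : 0 < α + β') (h2 : 0 < β + α')
    (h3 : α' * β' < (α + β') * (β + α')) :
    letI D : ℝ := (α + β') * (β + α') - α' * β'
    letI rA : ℝ := ((α - α') * (β + α') + α' * (β - β')) * (α + β') / D
    letI rB : ℝ := ((β - β') * (α + β') + β' * (α - α')) * (β + α') / D
    (rA = (α - α') + α' * (rB / (β + α')) ∧
      rB = (β - β') + β' * (rA / (α + β'))) ∧
    ∀ x y : ℝ,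
      x = (α - α') + α' * (y / (β + α')) →
      y = (β - β') + β' * (x / (α + β')) →
      x = rA ∧ y = rB := by
  have hD : (α + β') * (β + α') - α' * β' ≠ 0 := by nlinarith
  have h1' : α + β' ≠ 0 := ne_of_gt h1
  have h2' : β + α' ≠ 0 := ne_of_gt h2
  refine ⟨⟨?_, ?_⟩, ?_⟩
  · rw [div_div, mul_div_mul_right _ _ h2', mul_div_assoc', add_div' _ _ _ hD, div_left_inj' hD]
    ring
  · rw [div_div, mul_div_mul_right _ _ h1', mul_div_assoc', add_div' _ _ _ hD, div_left_inj' hD]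
    ring
  · intro x y hx hy
    rw [hy] at hx
    have hxA : x = ((α - α') * (β + α') + α' * (β - β')) * (α + β') /
        ((α + β') * (β + α') - α' * β') := by
      field_simp at hx ⊢
      nlinarith [hx]
    refine ⟨hxA, ?_⟩
    rw [hxA] at hy
    rw [hy, div_div, mul_div_mul_right _ _ h1', mul_div_assoc', add_div' _ _ _ hD, div_left_inj' hD]
    ring
end

section
/- Let α, β, α' be real numbers with 0 < α, 0 < β and 0 < α' < α, and set β' = 0 (pool A infiltrates pool B, and B does not retaliate). Then the unique pair (r_A, r_B) satisfying r_A = (α − α') + α'·(r_B/(β + α')) and r_B = (β − β') + β'·(r_A/(α + β')) is r_B = β and r_A = (α − α') + α'·β/(β + α'), and it satisfies r_A/α > r_B/(β + α') and r_B/(β + α') < 1; that is, the attacking pool A is strictly more attractive than the victim pool B, and the victim pool's attractiveness is strictly less than 1. -/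
/-- Unilateral block-withholding attack (`β' = 0`): the unique solution of the revenue
system is `r_B = β` and `r_A = (α − α') + α'·β/(β + α')`, the attacking pool `A` is
strictly more attractive than the victim pool `B`, and the victim's attractiveness is
strictly less than 1. -/
theorem stmt7 (α β α' β' : ℝ) (hα : 0 < α) (hβ : 0 < β)
    (hα'0 : 0 < α') (hα' : α' < α) (hβ' : β' = 0) :
    (∃! p : ℝ × ℝ,
      p.1 = (α - α') + α' * (p.2 / (β + α')) ∧
      p.2 = (β - β') + β' * (p.1 / (α + β'))) ∧
    ∀ rA rB : ℝ,
      rA = (α - α') + α' * (rB / (β + α')) →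
      rB = (β - β') + β' * (rA / (α + β')) →
      rB = β ∧ rA = (α - α') + α' * β / (β + α') ∧
        rB / (β + α') < rA / α ∧ rB / (β + α') < 1 := by
  subst hβ'
  have hba : 0 < β + α' := by linarith
  have hba' : β + α' ≠ 0 := ne_of_gt hba
  constructor
  · refine ⟨((α - α') + α' * (β / (β + α')), β), ⟨by ring, by ring⟩, ?_⟩
    rintro ⟨a, b⟩ ⟨h1, h2⟩
    simp only [Prod.mk.injEq]
    have hb : b = β := by simpa using h2
    subst hb
    exact ⟨by simpa using h1, rfl⟩
  · intro rA rB h1 h2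
    have hb : rB = β := by simpa using h2
    rw [hb] at h1 ⊢
    have hA : rA = (α - α') + α' * β / (β + α') := by rw [h1]; ring
    refine ⟨rfl, hA, ?_, ?_⟩
    · rw [hA]
      rw [div_lt_div_iff₀ hba hα]
      have key : ((α - α') + α' * β / (β + α')) * (β + α') = α * β + α' * (α - α') := by
        field_simp
        ring
      rw [key]
      nlinarith
    · rw [div_lt_one hba]
      linarith
end

section
/- Let S be a finite nonempty set, P an irreducible row-stochastic matrix on S, r : S → ℝ a reward function, and t ∈ S a distinguished state. Then there exists a unique pair (g, v) with g ∈ ℝ and v : S → ℝ such that v(t) = 0 and, for every s ∈ S, g + v(s) = r(s) + Σ_{s' ∈ S} P(s, s')·v(s'). -/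
open Finset

section Aux

variable {S : Type*} [Fintype S] [Nonempty S] [DecidableEq S]

/-- Powers of a row-stochastic nonnegative matrix are row-stochastic nonnegative. -/
lemma stmt8_pow_aux (P : Matrix S S ℝ)
    (hnonneg : ∀ s s' : S, 0 ≤ P s s')
    (hrow : ∀ s : S, ∑ s' : S, P s s' = 1) (k : ℕ) :
    (∀ s s' : S, 0 ≤ (P ^ k) s s') ∧ (∀ s : S, ∑ s' : S, (P ^ k) s s' = 1) := by
  induction k with
  | zero =>
    constructor
    · intro s s'
      by_cases h : s = s' <;> simp [Matrix.one_apply, h]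
    · intro s
      simp [Matrix.one_apply]
  | succ k ih =>
    constructor
    · intro s s'
      rw [pow_succ, Matrix.mul_apply]
      exact Finset.sum_nonneg fun u _ => mul_nonneg (ih.1 s u) (hnonneg u s')
    · intro s
      simp only [pow_succ, Matrix.mul_apply]
      rw [Finset.sum_comm]
      calc ∑ u : S, ∑ s' : S, (P ^ k) s u * P u s'
          = ∑ u : S, (P ^ k) s u * ∑ s' : S, P u s' := by
            simp [Finset.mul_sum]
        _ = 1 := by simp [hrow, ih.2 s]

/-- A harmonic function is harmonic for all powers. -/
lemma stmt8_harm_aux (P : Matrix S S ℝ) (v : S → ℝ)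
    (hv : ∀ s : S, v s = ∑ s' : S, P s s' * v s') (k : ℕ) :
    ∀ s : S, v s = ∑ s' : S, (P ^ k) s s' * v s' := by
  induction k with
  | zero => intro s; simp [Matrix.one_apply]
  | succ k ih =>
    intro s
    simp only [pow_succ', Matrix.mul_apply]
    calc v s = ∑ u : S, P s u * v u := hv s
      _ = ∑ u : S, P s u * ∑ s' : S, (P ^ k) u s' * v s' := by
          refine Finset.sum_congr rfl fun u _ => by rw [← ih u]
      _ = ∑ u : S, ∑ s' : S, P s u * (P ^ k) u s' * v s' := by
          simp [Finset.mul_sum, mul_assoc]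
      _ = ∑ s' : S, (∑ u : S, P s u * (P ^ k) u s') * v s' := by
          rw [Finset.sum_comm]; simp [Finset.sum_mul]

end Aux

/-- For an irreducible row-stochastic matrix `P` on a finite nonempty state space `S`,
a reward function `r` and a distinguished state `t`, there is a unique pair `(g, v)`
with `v t = 0` solving the gain/bias system `g + v s = r s + Σ_{s'} P s s' · v s'`. -/
theorem stmt8 {S : Type*} [Fintype S] [Nonempty S] [DecidableEq S]
    (P : Matrix S S ℝ)
    (hnonneg : ∀ s s' : S, 0 ≤ P s s')
    (hrow : ∀ s : S, ∑ s' : S, P s s' = 1)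
    (hirr : ∀ s s' : S, ∃ k : ℕ, 1 ≤ k ∧ 0 < (P ^ k) s s')
    (r : S → ℝ) (t : S) :
    ∃! p : ℝ × (S → ℝ),
      p.2 t = 0 ∧ ∀ s : S, p.1 + p.2 s = r s + ∑ s' : S, P s s' * p.2 s' := by
  classical
  -- The linear endomorphism encoding the system
  let T : (ℝ × (S → ℝ)) →ₗ[ℝ] (ℝ × (S → ℝ)) :=
    { toFun := fun p => (p.2 t, fun s => p.1 + p.2 s - ∑ s' : S, P s s' * p.2 s')
      map_add' := by
        intro p q
        ext
        · simp
        · simp [Finset.sum_add_distrib, mul_add]; ring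
      map_smul' := by
        intro c p
        ext
        · simp
        · have h : ∀ (s : S), ∑ s' : S, P s s' * (c * p.2 s') =
              c * ∑ s' : S, P s s' * p.2 s' := by
            intro s
            rw [Finset.mul_sum]
            exact Finset.sum_congr rfl fun i _ => by ring
          simp [h]
          ring }
  -- Injectivity of T
  have hinj : Function.Injective T := by
    rw [← LinearMap.ker_eq_bot, LinearMap.ker_eq_bot']
    intro p hp
    obtain ⟨g, v⟩ := p
    have h1 : v t = 0 := congrArg Prod.fst hp
    have h2 : ∀ s : S, g + v s - ∑ s' : S, P s s' * v s' = 0 :=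
      fun s => congrFun (congrArg Prod.snd hp) s
    have heq : ∀ s : S, g + v s = ∑ s' : S, P s s' * v s' := by
      intro s; have := h2 s; linarith
    -- g = 0 via max/min
    obtain ⟨smax, hsmax⟩ := Finite.exists_max v
    obtain ⟨smin, hsmin⟩ := Finite.exists_min v
    have hgle : g ≤ 0 := by
      have : ∑ s' : S, P smax s' * v s' ≤ ∑ s' : S, P smax s' * v smax :=
        Finset.sum_le_sum fun s' _ =>
          mul_le_mul_of_nonneg_left (hsmax s') (hnonneg smax s')
      have h3 : ∑ s' : S, P smax s' * v smax = v smax := by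
        rw [← Finset.sum_mul, hrow, one_mul]
      have := heq smax
      linarith
    have hgge : 0 ≤ g := by
      have : ∑ s' : S, P smin s' * v smin ≤ ∑ s' : S, P smin s' * v s' :=
        Finset.sum_le_sum fun s' _ =>
          mul_le_mul_of_nonneg_left (hsmin s') (hnonneg smin s')
      have h3 : ∑ s' : S, P smin s' * v smin = v smin := by
        rw [← Finset.sum_mul, hrow, one_mul]
      have := heq smin
      linarith
    have hg : g = 0 := le_antisymm hgle hgge
    -- v is harmonic, so by irreducibility it is constant = v smax
    have hharm : ∀ s : S, v s = ∑ s' : S, P s s' * v s' := by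
      intro s; have := heq s; rw [hg] at this; linarith
    have hconst : ∀ s : S, v s = v smax := by
      intro s
      obtain ⟨k, -, hk⟩ := hirr smax s
      have hvk := stmt8_harm_aux P v hharm k smax
      obtain ⟨hknn, hkrow⟩ := stmt8_pow_aux P hnonneg hrow k
      have hzero : ∑ s' : S, (P ^ k) smax s' * (v smax - v s') = 0 := by
        have : ∑ s' : S, (P ^ k) smax s' * (v smax - v s') =
            (∑ s' : S, (P ^ k) smax s' * v smax) - ∑ s' : S, (P ^ k) smax s' * v s' := by
          rw [← Finset.sum_sub_distrib]; simp [mul_sub]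
        rw [this, ← Finset.sum_mul, hkrow, one_mul, ← hvk]
        ring
      have hterm : (P ^ k) smax s * (v smax - v s) = 0 := by
        have := (Finset.sum_eq_zero_iff_of_nonneg
          (fun s' _ => mul_nonneg (hknn smax s') (by linarith [hsmax s']))).mp hzero
        exact this s (Finset.mem_univ s)
      rcases mul_eq_zero.mp hterm with h | h
      · exact absurd h (ne_of_gt hk)
      · linarith
    have hvmax : v smax = 0 := by rw [← h1, hconst t]
    have hv0 : v = 0 := by
      funext s; rw [hconst s, hvmax]; rfl
    have : g = 0 ∧ v = 0 := ⟨hg, hv0⟩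
    simp [Prod.ext_iff, hg, hv0]
  -- Surjectivity from injectivity in finite dimension
  have hsurj : Function.Surjective T := (LinearMap.injective_iff_surjective).mp hinj
  obtain ⟨p, hp⟩ := hsurj (0, r)
  refine ⟨p, ⟨congrArg Prod.fst hp, ?_⟩, ?_⟩
  · intro s
    have := congrFun (congrArg Prod.snd hp) s
    simp only [T, LinearMap.coe_mk, AddHom.coe_mk] at this
    linarith [this]
  · intro q ⟨hq1, hq2⟩
    apply hinj
    rw [hp]
    ext
    · exact hq1
    · rename_i s
      show q.1 + q.2 s - ∑ s' : S, P s s' * q.2 s' = r s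
      linarith [hq2 s]
end

section
/- Let S and A be finite nonempty sets, δ : S × A × S → ℝ a transition function with δ(s, a, s') ≥ 0 and Σ_{s'} δ(s, a, s') = 1 for all s ∈ S, a ∈ A, and r : S × A → ℝ a reward function. Assume that for every policy π : S → A the matrix P_π defined by P_π(s, s') = δ(s, π(s), s') is irreducible. Fix t ∈ S. Then there exists a unique pair (g, v) with g ∈ ℝ and v : S → ℝ such that v(t) = 0 and, for every s ∈ S, g + v(s) = min_{a ∈ A} ( r(s, a) + Σ_{s' ∈ S} δ(s, a, s')·v(s') ). -/
open Finset Matrix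

set_option linter.unusedSectionVars false
set_option linter.unusedVariables false

section MC
variable {S : Type*} [Fintype S] [DecidableEq S] [Nonempty S]

lemma powNonneg (P : Matrix S S ℝ) (hnn : ∀ s s', 0 ≤ P s s') :
    ∀ (k : ℕ) (s s' : S), 0 ≤ (P ^ k) s s' := by
  intro k
  induction k with
  | zero => intro s s'; simp [Matrix.one_apply]; split_ifs <;> norm_num
  | succ k ih =>
      intro s s'
      rw [pow_succ, Matrix.mul_apply]
      exact Finset.sum_nonneg fun u _ => mul_nonneg (ih s u) (hnn u s')

lemma harmonicConst (P : Matrix S S ℝ) (hnn : ∀ s s', 0 ≤ P s s')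
    (hrow : ∀ s, ∑ s', P s s' = 1)
    (hirr : ∀ s s', ∃ k : ℕ, 1 ≤ k ∧ 0 < (P ^ k) s s')
    (x : S → ℝ) (hx : ∀ s, x s = ∑ s', P s s' * x s') :
    ∀ s s', x s = x s' := by
  obtain ⟨s0, -, hs0⟩ := Finset.exists_max_image (univ : Finset S) x univ_nonempty
  have step : ∀ u, x u = x s0 → ∀ s', 0 < P u s' → x s' = x s0 := by
    intro u hu s' hPu
    have hsum : ∑ w, P u w * (x s0 - x w) = 0 := by
      have h1 : ∑ w, P u w * (x s0 - x w)
          = (∑ w, P u w) * x s0 - ∑ w, P u w * x w := by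
        rw [Finset.sum_mul, ← Finset.sum_sub_distrib]
        exact Finset.sum_congr rfl fun w _ => by ring
      rw [h1, hrow, one_mul, ← hx u, hu]
      ring
    have hterm := (Finset.sum_eq_zero_iff_of_nonneg
      (fun w _ => mul_nonneg (hnn u w) (by linarith [hs0 w (mem_univ w)]))).mp hsum
      s' (mem_univ s')
    have := mul_eq_zero.mp hterm
    rcases this with h | h
    · exact absurd h (ne_of_gt hPu)
    · linarith
  have key : ∀ (k : ℕ) (u : S), 0 < (P ^ k) s0 u → x u = x s0 := by
    intro k
    induction k with
    | zero =>
        intro u hu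
        simp [Matrix.one_apply] at hu
        split_ifs at hu with h
        · rw [← h]
        · norm_num at hu
    | succ k ih =>
        intro u hu
        rw [pow_succ, Matrix.mul_apply] at hu
        obtain ⟨w, -, hw⟩ : ∃ w ∈ univ, 0 < (P ^ k) s0 w * P w u := by
          by_contra h
          push_neg at h
          have : ∑ w, (P ^ k) s0 w * P w u ≤ 0 :=
            Finset.sum_nonpos fun w hw => h w hw
          linarith
        have h1 : 0 < (P ^ k) s0 w :=
          lt_of_le_of_ne (powNonneg P hnn k s0 w) (by
            intro h; rw [← h, zero_mul] at hw; exact lt_irrefl 0 hw)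
        have h2 : 0 < P w u := by
          by_contra h
          have : P w u = 0 := le_antisymm (not_lt.mp h) (hnn w u)
          rw [this, mul_zero] at hw; exact lt_irrefl 0 hw
        exact step w (ih w h1) u h2
  intro s s'
  obtain ⟨k, -, hk⟩ := hirr s0 s
  obtain ⟨k', -, hk'⟩ := hirr s0 s'
  rw [key k s hk, key k' s' hk']

lemma existsStat (P : Matrix S S ℝ) (hnn : ∀ s s', 0 ≤ P s s')
    (hrow : ∀ s, ∑ s', P s s' = 1)
    (hirr : ∀ s s', ∃ k : ℕ, 1 ≤ k ∧ 0 < (P ^ k) s s')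
    (hpnn : ∀ (k : ℕ) (s s' : S), 0 ≤ (P ^ k) s s') :
    ∃ μ : S → ℝ, (∀ s, 0 < μ s) ∧ (∀ s', ∑ s, μ s * P s s' = μ s')
      ∧ ∑ s, μ s = 1 := by
  -- det (P - 1) = 0 because (P-1) • 1 = 0
  have hdet : (P - 1).det = 0 := by
    rw [← Matrix.exists_mulVec_eq_zero_iff]
    refine ⟨fun _ => 1, ?_, ?_⟩
    · intro h
      have := congrFun h (Classical.arbitrary S)
      norm_num at this
    · funext s
      simp [Matrix.mulVec, dotProduct, Matrix.sub_apply, Matrix.one_apply,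
        Finset.sum_sub_distrib, hrow]
  have hdetT : (Pᵀ - 1).det = 0 := by
    have : (Pᵀ - 1) = (P - 1)ᵀ := by
      rw [Matrix.transpose_sub, Matrix.transpose_one]
    rw [this, Matrix.det_transpose]; exact hdet
  obtain ⟨ν, hν0, hνstat⟩ := Matrix.exists_mulVec_eq_zero_iff.mpr hdetT
  -- ν is stationary: ∑ s, P s s' * ν s = ν s'
  have hstat : ∀ s', ∑ s, ν s * P s s' = ν s' := by
    intro s'
    have h := congrFun hνstat s'
    simp only [Matrix.mulVec, dotProduct, Matrix.sub_apply, Matrix.transpose_apply,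
      Matrix.one_apply, Pi.zero_apply, sub_mul, Finset.sum_sub_distrib, ite_mul, one_mul,
      zero_mul, Finset.sum_ite_eq, mem_univ, if_true] at h
    have h2 : ∑ s, ν s * P s s' = ∑ s, P s s' * ν s :=
      Finset.sum_congr rfl fun s _ => mul_comm _ _
    rw [h2]; linarith
  set f : S → ℝ := fun s => |ν s| with hf
  have hle : ∀ s', f s' ≤ ∑ s, f s * P s s' := by
    intro s'
    calc f s' = |∑ s, ν s * P s s'| := by rw [hstat]
    _ ≤ ∑ s, |ν s * P s s'| := Finset.abs_sum_le_sum_abs _ _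
    _ = ∑ s, f s * P s s' := Finset.sum_congr rfl fun s _ => by
        rw [abs_mul, abs_of_nonneg (hnn s s')]
  have hsums : ∑ s', ∑ s, f s * P s s' = ∑ s', f s' := by
    rw [Finset.sum_comm]
    exact Finset.sum_congr rfl fun s _ => by rw [← Finset.mul_sum, hrow, mul_one]
  have hfstat : ∀ s', ∑ s, f s * P s s' = f s' := by
    intro s'
    by_contra hne
    have hlt : f s' < ∑ s, f s * P s s' := lt_of_le_of_ne (hle s') fun h => hne h.symm
    have h5 : ∑ w, f w < ∑ w, ∑ s, f s * P s w :=
      Finset.sum_lt_sum (fun i _ => hle i) ⟨s', mem_univ s', hlt⟩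
    rw [hsums] at h5
    exact lt_irrefl _ h5
  have hpow : ∀ (k : ℕ) (s' : S), ∑ s, f s * (P ^ k) s s' = f s' := by
    intro k
    induction k with
    | zero => intro s'; simp [Matrix.one_apply, mul_ite]
    | succ k ih =>
        intro s'
        rw [pow_succ]
        calc ∑ s, f s * (P ^ k * P) s s'
            = ∑ s, ∑ w, f s * ((P ^ k) s w * P w s') := by
              refine Finset.sum_congr rfl fun s _ => ?_
              rw [Matrix.mul_apply, Finset.mul_sum]
        _ = ∑ w, (∑ s, f s * (P ^ k) s w) * P w s' := by
              rw [Finset.sum_comm]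
              refine Finset.sum_congr rfl fun w _ => ?_
              rw [Finset.sum_mul]
              exact Finset.sum_congr rfl fun s _ => by ring
        _ = ∑ w, f w * P w s' := Finset.sum_congr rfl fun w _ => by rw [ih w]
        _ = f s' := hfstat s'
  obtain ⟨s0, hs0⟩ := Function.ne_iff.mp hν0
  have hfs0 : 0 < f s0 := abs_pos.mpr hs0
  have hfpos : ∀ s', 0 < f s' := by
    intro s'
    obtain ⟨k, -, hk⟩ := hirr s0 s'
    have h6 : f s0 * (P ^ k) s0 s' ≤ ∑ s, f s * (P ^ k) s s' :=
      Finset.single_le_sum (fun s _ => mul_nonneg (abs_nonneg _) (hpnn k s s')) (mem_univ s0)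
    rw [hpow k s'] at h6
    exact lt_of_lt_of_le (mul_pos hfs0 hk) h6
  have hT : 0 < ∑ u, f u := Finset.sum_pos (fun s _ => hfpos s) univ_nonempty
  refine ⟨fun s => f s / (∑ u, f u), fun s => div_pos (hfpos s) hT, ?_, ?_⟩
  · intro s'
    have h7 : ∑ s, f s / (∑ u, f u) * P s s' = (∑ s, f s * P s s') / (∑ u, f u) := by
      rw [Finset.sum_div]
      exact Finset.sum_congr rfl fun s _ => by ring
    rw [h7, hfstat]
  · rw [← Finset.sum_div, div_self (ne_of_gt hT)]
lemma poisson (P : Matrix S S ℝ) (hnn : ∀ s s', 0 ≤ P s s')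
    (hrow : ∀ s, ∑ s', P s s' = 1)
    (hirr : ∀ s s', ∃ k : ℕ, 1 ≤ k ∧ 0 < (P ^ k) s s')
    (hconst : ∀ x : S → ℝ, (∀ s, x s = ∑ s', P s s' * x s') → ∀ s s', x s = x s')
    (μ : S → ℝ) (hμstat : ∀ s', ∑ s, μ s * P s s' = μ s') (hμ1 : ∑ s, μ s = 1)
    (r : S → ℝ) (t : S) :
    ∃ v : S → ℝ, v t = 0 ∧
      ∀ s, (∑ u, μ u * r u) + v s = r s + ∑ s', P s s' * v s' := by
  classical
  set n := Fintype.card S with hn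
  set T : (S → ℝ) →ₗ[ℝ] (S → ℝ) := LinearMap.id - P.mulVecLin with hT
  have hTapp : ∀ (x : S → ℝ) (s : S), T x s = x s - ∑ s', P s s' * x s' := by
    intro x s
    simp [hT, Matrix.mulVecLin_apply, Matrix.mulVec, dotProduct]
  -- φ : weighting by μ
  set φ : (S → ℝ) →ₗ[ℝ] ℝ :=
    { toFun := fun y => ∑ s, μ s * y s,
      map_add' := by
        intro y z
        simp [mul_add, Finset.sum_add_distrib]
      map_smul' := by
        intro c y
        simp [Finset.mul_sum]
        exact Finset.sum_congr rfl fun s _ => by ring } with hφ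
  have hφapp : ∀ y : S → ℝ, φ y = ∑ s, μ s * y s := fun y => rfl
  -- ones vector
  have hone_ne : (fun _ : S => (1:ℝ)) ≠ 0 := by
    intro h
    have := congrFun h (Classical.arbitrary S)
    norm_num at this
  have hT1 : T (fun _ => (1:ℝ)) = 0 := by
    funext s
    rw [hTapp]
    simp [hrow]
  -- kernel of T is the span of ones
  have hker : LinearMap.ker T = Submodule.span ℝ {fun _ : S => (1:ℝ)} := by
    apply le_antisymm
    · intro x hx
      have hxh : ∀ s, x s = ∑ s', P s s' * x s' := by
        intro s
        have := congrFun (LinearMap.mem_ker.mp hx) s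
        rw [hTapp] at this
        simp only [Pi.zero_apply] at this
        linarith
      have hxc := hconst x hxh
      have : x = (x t) • (fun _ : S => (1:ℝ)) := by
        funext s
        simp [hxc s t]
      rw [this]
      exact Submodule.smul_mem _ _ (Submodule.mem_span_singleton_self _)
    · rw [Submodule.span_le]
      intro y hy
      simp only [Set.mem_singleton_iff] at hy
      subst hy
      exact LinearMap.mem_ker.mpr hT1
  have hkerrank : Module.finrank ℝ (LinearMap.ker T) = 1 := by
    rw [hker]; exact finrank_span_singleton hone_ne
  -- range T ≤ ker φ
  have hle : LinearMap.range T ≤ LinearMap.ker φ := by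
    rintro y ⟨x, rfl⟩
    rw [LinearMap.mem_ker, hφapp]
    have : ∑ s, μ s * T x s = ∑ s, μ s * x s - ∑ s, μ s * (∑ s', P s s' * x s') := by
      rw [← Finset.sum_sub_distrib]
      exact Finset.sum_congr rfl fun s _ => by rw [hTapp]; ring
    rw [this]
    have hswap : ∑ s, μ s * (∑ s', P s s' * x s') = ∑ s', μ s' * x s' := by
      calc ∑ s, μ s * (∑ s', P s s' * x s')
          = ∑ s, ∑ s', μ s * P s s' * x s' := by
            refine Finset.sum_congr rfl fun s _ => ?_
            rw [Finset.mul_sum]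
            exact Finset.sum_congr rfl fun s' _ => by ring
      _ = ∑ s', ∑ s, μ s * P s s' * x s' := Finset.sum_comm
      _ = ∑ s', (∑ s, μ s * P s s') * x s' := by
            refine Finset.sum_congr rfl fun s' _ => ?_
            rw [Finset.sum_mul]
      _ = ∑ s', μ s' * x s' := Finset.sum_congr rfl fun s' _ => by rw [hμstat]
    linarith [this, hswap]
  -- φ is a nonzero functional
  have hφ1 : φ (fun _ => (1:ℝ)) = 1 := by
    rw [hφapp]
    simpa using hμ1
  have hφne : φ ≠ 0 := by
    intro h
    rw [h] at hφ1
    simp at hφ1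
  have hrangeφ : Module.finrank ℝ (LinearMap.range φ) = 1 := by
    have hb : LinearMap.range φ ≠ ⊥ := fun h => hφne (LinearMap.range_eq_bot.mp h)
    rcases eq_bot_or_eq_top (LinearMap.range φ) with h | h
    · exact absurd h hb
    · rw [h, finrank_top, Module.finrank_self]
  have e1 := LinearMap.finrank_range_add_finrank_ker T
  have e2 := LinearMap.finrank_range_add_finrank_ker φ
  rw [hkerrank, Module.finrank_pi] at e1
  rw [hrangeφ, Module.finrank_pi] at e2
  have heq : Module.finrank ℝ (LinearMap.range T) = Module.finrank ℝ (LinearMap.ker φ) := by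
    omega
  have hrange : LinearMap.range T = LinearMap.ker φ :=
    Submodule.eq_of_le_of_finrank_eq hle heq
  set g := ∑ u, μ u * r u with hg
  have hy : (fun s => r s - g) ∈ LinearMap.ker φ := by
    rw [LinearMap.mem_ker, hφapp]
    have h3 : ∑ s, μ s * (r s - g) = ∑ s, μ s * r s - (∑ s, μ s) * g := by
      rw [Finset.sum_mul, ← Finset.sum_sub_distrib]
      exact Finset.sum_congr rfl fun s _ => by ring
    rw [h3, hμ1]
    ring
  rw [← hrange] at hy
  obtain ⟨v0, hv0⟩ := hy
  refine ⟨fun s => v0 s - v0 t, by simp, ?_⟩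
  intro s
  have h1 := congrFun hv0 s
  rw [hTapp] at h1
  have h2 : ∑ s', P s s' * (v0 s' - v0 t)
      = (∑ s', P s s' * v0 s') - (∑ s', P s s') * v0 t := by
    rw [Finset.sum_mul, ← Finset.sum_sub_distrib]
    exact Finset.sum_congr rfl fun s' _ => by ring
  rw [h2, hrow, one_mul]
  dsimp only at h1 ⊢
  linarith
lemma weightPV (P : Matrix S S ℝ) (μ : S → ℝ)
    (hμstat : ∀ s', ∑ s, μ s * P s s' = μ s') (v : S → ℝ) :
    ∑ s, μ s * (∑ s', P s s' * v s') = ∑ s, μ s * v s := by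
  calc ∑ s, μ s * (∑ s', P s s' * v s')
      = ∑ s, ∑ s', μ s * P s s' * v s' := by
        refine Finset.sum_congr rfl fun s _ => ?_
        rw [Finset.mul_sum]
        exact Finset.sum_congr rfl fun s' _ => by ring
  _ = ∑ s', ∑ s, μ s * P s s' * v s' := Finset.sum_comm
  _ = ∑ s', (∑ s, μ s * P s s') * v s' := by
        refine Finset.sum_congr rfl fun s' _ => ?_
        rw [Finset.sum_mul]
  _ = ∑ s', μ s' * v s' := Finset.sum_congr rfl fun s' _ => by rw [hμstat]

lemma weightG (μ : S → ℝ) (hμ1 : ∑ s, μ s = 1) (g : ℝ) (v : S → ℝ) :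
    ∑ s, μ s * (g + v s) = g + ∑ s, μ s * v s := by
  have : ∑ s, μ s * (g + v s) = (∑ s, μ s) * g + ∑ s, μ s * v s := by
    rw [Finset.sum_mul, ← Finset.sum_add_distrib]
    exact Finset.sum_congr rfl fun s _ => by ring
  rw [this, hμ1, one_mul]

lemma weightRPV (P : Matrix S S ℝ) (μ : S → ℝ)
    (hμstat : ∀ s', ∑ s, μ s * P s s' = μ s') (r v : S → ℝ) :
    ∑ s, μ s * (r s + ∑ s', P s s' * v s') = ∑ s, μ s * r s + ∑ s, μ s * v s := by
  have : ∑ s, μ s * (r s + ∑ s', P s s' * v s')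
      = ∑ s, μ s * r s + ∑ s, μ s * (∑ s', P s s' * v s') := by
    rw [← Finset.sum_add_distrib]
    exact Finset.sum_congr rfl fun s _ => by ring
  rw [this, weightPV P μ hμstat v]

lemma gainEq (P : Matrix S S ℝ) (μ : S → ℝ)
    (hμstat : ∀ s', ∑ s, μ s * P s s' = μ s') (hμ1 : ∑ s, μ s = 1)
    (g : ℝ) (v r : S → ℝ) (h : ∀ s, g + v s = r s + ∑ s', P s s' * v s') :
    g = ∑ s, μ s * r s := by
  have H : ∑ s, μ s * (g + v s) = ∑ s, μ s * (r s + ∑ s', P s s' * v s') :=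
    Finset.sum_congr rfl fun s _ => by rw [h s]
  rw [weightG μ hμ1, weightRPV P μ hμstat] at H
  linarith

lemma gainGe (P : Matrix S S ℝ) (μ : S → ℝ) (hμpos : ∀ s, 0 < μ s)
    (hμstat : ∀ s', ∑ s, μ s * P s s' = μ s') (hμ1 : ∑ s, μ s = 1)
    (g : ℝ) (v r : S → ℝ) (h : ∀ s, g + v s ≤ r s + ∑ s', P s s' * v s') :
    g ≤ ∑ s, μ s * r s := by
  have H : ∑ s, μ s * (g + v s) ≤ ∑ s, μ s * (r s + ∑ s', P s s' * v s') :=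
    Finset.sum_le_sum fun s _ => mul_le_mul_of_nonneg_left (h s) (le_of_lt (hμpos s))
  rw [weightG μ hμ1, weightRPV P μ hμstat] at H
  linarith

lemma gainLt (P : Matrix S S ℝ) (μ : S → ℝ) (hμpos : ∀ s, 0 < μ s)
    (hμstat : ∀ s', ∑ s, μ s * P s s' = μ s') (hμ1 : ∑ s, μ s = 1)
    (g : ℝ) (v r : S → ℝ) (h : ∀ s, r s + ∑ s', P s s' * v s' ≤ g + v s)
    (s0 : S) (hs0 : r s0 + ∑ s', P s0 s' * v s' < g + v s0) :
    ∑ s, μ s * r s < g := by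
  have H : ∑ s, μ s * (r s + ∑ s', P s s' * v s') < ∑ s, μ s * (g + v s) :=
    Finset.sum_lt_sum (fun s _ => mul_le_mul_of_nonneg_left (h s) (le_of_lt (hμpos s)))
      ⟨s0, mem_univ s0, by exact mul_lt_mul_of_pos_left hs0 (hμpos s0)⟩
  rw [weightG μ hμ1, weightRPV P μ hμstat] at H
  linarith

lemma superharmEq (P : Matrix S S ℝ) (μ : S → ℝ) (hμpos : ∀ s, 0 < μ s)
    (hμstat : ∀ s', ∑ s, μ s * P s s' = μ s')
    (w : S → ℝ) (h : ∀ s, ∑ s', P s s' * w s' ≤ w s) :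
    ∀ s, w s = ∑ s', P s s' * w s' := by
  have hzero : ∑ s, μ s * (w s - ∑ s', P s s' * w s') = 0 := by
    have : ∑ s, μ s * (w s - ∑ s', P s s' * w s')
        = ∑ s, μ s * w s - ∑ s, μ s * (∑ s', P s s' * w s') := by
      rw [← Finset.sum_sub_distrib]
      exact Finset.sum_congr rfl fun s _ => by ring
    rw [this, weightPV P μ hμstat w, sub_self]
  have hterm := (Finset.sum_eq_zero_iff_of_nonneg
    (fun s _ => mul_nonneg (le_of_lt (hμpos s)) (by linarith [h s]))).mp hzero
  intro s
  have := hterm s (mem_univ s)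
  rcases mul_eq_zero.mp this with h1 | h1
  · exact absurd h1 (ne_of_gt (hμpos s))
  · linarith
end MC

/-- Bellman optimality system for an ergodic finite MDP: if every deterministic
stationary policy `π` induces an irreducible chain, then for any distinguished state
`t` there is a unique pair `(g, v)` with `v t = 0` satisfying
`g + v s = min_{a} ( r s a + Σ_{s'} δ s a s' · v s' )` for all `s`. -/

theorem stmt9 {S A : Type*} [Fintype S] [Nonempty S] [DecidableEq S]
    [Fintype A] [Nonempty A]
    (δ : S → A → S → ℝ)
    (hnonneg : ∀ (s : S) (a : A) (s' : S), 0 ≤ δ s a s')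
    (hrow : ∀ (s : S) (a : A), ∑ s' : S, δ s a s' = 1)
    (hirr : ∀ π : S → A, ∀ s s' : S,
      ∃ k : ℕ, 1 ≤ k ∧ 0 < ((Matrix.of fun u u' => δ u (π u) u') ^ k) s s')
    (r : S → A → ℝ) (t : S) :
    ∃! p : ℝ × (S → ℝ),
      p.2 t = 0 ∧ ∀ s : S,
        p.1 + p.2 s =
          Finset.univ.inf' Finset.univ_nonempty
            (fun a : A => r s a + ∑ s' : S, δ s a s' * p.2 s') := by
  classical
  set Pm : (S → A) → Matrix S S ℝ := fun π => Matrix.of fun u u' => δ u (π u) u' with hPm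
  have hPnn : ∀ π s s', 0 ≤ Pm π s s' := fun π s s' => hnonneg s (π s) s'
  have hProw : ∀ π s, ∑ s', Pm π s s' = 1 := fun π s => hrow s (π s)
  have hPirr : ∀ (π : S → A) (s s' : S), ∃ k : ℕ, 1 ≤ k ∧ 0 < ((Pm π) ^ k) s s' := hirr
  have hconst : ∀ π, ∀ x : S → ℝ,
      (∀ s, x s = ∑ s', Pm π s s' * x s') → ∀ s s', x s = x s' :=
    fun π => harmonicConst (Pm π) (hPnn π) (hProw π) (hPirr π)
  have hstat : ∀ π : S → A, ∃ μ : S → ℝ, (∀ s, 0 < μ s)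
      ∧ (∀ s', ∑ s, μ s * Pm π s s' = μ s') ∧ ∑ s, μ s = 1 :=
    fun π => existsStat (Pm π) (hPnn π) (hProw π) (hPirr π) (powNonneg (Pm π) (hPnn π))
  choose μf hμpos hμstat hμ1 using hstat
  set gf : (S → A) → ℝ := fun π => ∑ u, μf π u * r u (π u) with hgf
  have hpois : ∀ π : S → A, ∃ v : S → ℝ, v t = 0 ∧
      ∀ s, gf π + v s = r s (π s) + ∑ s', Pm π s s' * v s' :=
    fun π => poisson (Pm π) (hPnn π) (hProw π) (hPirr π) (hconst π) (μf π)
      (hμstat π) (hμ1 π) (fun s => r s (π s)) t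
  choose vf hvt hpe using hpois
  obtain ⟨π0, -, hπ0⟩ := Finset.exists_min_image (univ : Finset (S → A)) gf univ_nonempty
  set g := gf π0 with hgdef
  set v := vf π0 with hvdef
  -- the inf is at most g + v s
  have hub : ∀ s, univ.inf' univ_nonempty
      (fun a : A => r s a + ∑ s', δ s a s' * v s') ≤ g + v s := by
    intro s
    have h1 := Finset.inf'_le (s := (univ : Finset A))
      (fun a : A => r s a + ∑ s', δ s a s' * v s') (mem_univ (π0 s))
    have h2 : r s (π0 s) + ∑ s', δ s (π0 s) s' * v s' = g + v s := (hpe π0 s).symm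
    exact h2 ▸ h1
  -- the inf is at least g + v s (policy improvement argument)
  have hge : ∀ s, g + v s ≤ univ.inf' univ_nonempty
      (fun a : A => r s a + ∑ s', δ s a s' * v s') := by
    by_contra hcon
    push_neg at hcon
    obtain ⟨s0, hs0⟩ := hcon
    have hsel : ∀ s : S, ∃ a ∈ (univ : Finset A),
        univ.inf' univ_nonempty (fun a : A => r s a + ∑ s', δ s a s' * v s')
          = r s a + ∑ s', δ s a s' * v s' :=
      fun s => Finset.exists_mem_eq_inf' univ_nonempty _
    choose π1 hmem hπ1 using hsel
    have hle1 : ∀ s, r s (π1 s) + ∑ s', Pm π1 s s' * v s' ≤ g + v s := by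
      intro s
      have := hub s
      rw [hπ1 s] at this
      exact this
    have hlt1 : r s0 (π1 s0) + ∑ s', Pm π1 s0 s' * v s' < g + v s0 := by
      have := hs0
      rw [hπ1 s0] at this
      exact this
    have hglt : gf π1 < g :=
      gainLt (Pm π1) (μf π1) (hμpos π1) (hμstat π1) (hμ1 π1) g v
        (fun s => r s (π1 s)) hle1 s0 hlt1
    exact absurd hglt (not_lt.mpr (hπ0 π1 (mem_univ π1)))
  have hbell : ∀ s, g + v s = univ.inf' univ_nonempty
      (fun a : A => r s a + ∑ s', δ s a s' * v s') :=
    fun s => le_antisymm (hge s) (hub s)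
  -- key comparison: any solution's gain is ≤ any other solution's gain
  have key : ∀ (G : ℝ) (V : S → ℝ),
      (∀ s, G + V s = univ.inf' univ_nonempty
        (fun a : A => r s a + ∑ s', δ s a s' * V s')) →
      ∀ (G' : ℝ) (V' : S → ℝ),
      (∀ s, G' + V' s = univ.inf' univ_nonempty
        (fun a : A => r s a + ∑ s', δ s a s' * V' s')) →
      G' ≤ G := by
    intro G V hV G' V' hV'
    have hsel : ∀ s : S, ∃ a ∈ (univ : Finset A),
        univ.inf' univ_nonempty (fun a : A => r s a + ∑ s', δ s a s' * V s')
          = r s a + ∑ s', δ s a s' * V s' :=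
      fun s => Finset.exists_mem_eq_inf' univ_nonempty _
    choose πV hmem hπV using hsel
    have hVeq : ∀ s, G + V s = r s (πV s) + ∑ s', Pm πV s s' * V s' := by
      intro s
      rw [hV s, hπV s]
      rfl
    have hGeq : G = ∑ u, μf πV u * r u (πV u) :=
      gainEq (Pm πV) (μf πV) (hμstat πV) (hμ1 πV) G V (fun s => r s (πV s)) hVeq
    have hV'le : ∀ s, G' + V' s ≤ r s (πV s) + ∑ s', Pm πV s s' * V' s' := by
      intro s
      rw [hV' s]
      exact Finset.inf'_le (fun a : A => r s a + ∑ s', δ s a s' * V' s')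
        (mem_univ (πV s))
    have h := gainGe (Pm πV) (μf πV) (hμpos πV) (hμstat πV) (hμ1 πV) G' V'
      (fun s => r s (πV s)) hV'le
    rw [hGeq]
    exact h
  refine ⟨(g, v), ⟨hvt π0, hbell⟩, ?_⟩
  rintro ⟨g2, v2⟩ ⟨hv2t, hb2⟩
  have hgg : g2 = g := le_antisymm (key g v hbell g2 v2 hb2) (key g2 v2 hb2 g v hbell)
  -- now show v2 = v
  have hsel : ∀ s : S, ∃ a ∈ (univ : Finset A),
      univ.inf' univ_nonempty (fun a : A => r s a + ∑ s', δ s a s' * v2 s')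
        = r s a + ∑ s', δ s a s' * v2 s' :=
    fun s => Finset.exists_mem_eq_inf' univ_nonempty _
  choose π2 hmem2 hπ2 using hsel
  have heq2 : ∀ s, g2 + v2 s = r s (π2 s) + ∑ s', Pm π2 s s' * v2 s' := by
    intro s
    rw [hb2 s, hπ2 s]
    rfl
  have hvle : ∀ s, g + v s ≤ r s (π2 s) + ∑ s', Pm π2 s s' * v s' := by
    intro s
    rw [hbell s]
    exact Finset.inf'_le (fun a : A => r s a + ∑ s', δ s a s' * v s') (mem_univ (π2 s))
  set w : S → ℝ := fun s => v2 s - v s with hw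
  have hsup : ∀ s, ∑ s', Pm π2 s s' * w s' ≤ w s := by
    intro s
    have hsplit : ∑ s', Pm π2 s s' * w s'
        = ∑ s', Pm π2 s s' * v2 s' - ∑ s', Pm π2 s s' * v s' := by
      rw [← Finset.sum_sub_distrib]
      exact Finset.sum_congr rfl fun s' _ => by simp [hw]; ring
    rw [hsplit]
    have h1 := heq2 s
    have h2 := hvle s
    simp only [hw]
    linarith [hgg]
  have hharm := superharmEq (Pm π2) (μf π2) (hμpos π2) (hμstat π2) w hsup
  have hwc := hconst π2 w hharm
  have hvv : v2 = v := by
    funext s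
    have h1 := hwc s t
    have h2 : w t = 0 := by
      show v2 t - v t = 0
      have hz : v2 t = 0 := hv2t
      rw [hz, hvdef, hvt π0, sub_zero]
    have h3 : w s = 0 := h1.trans h2
    simp only [hw] at h3
    linarith
  exact Prod.ext hgg hvv
end
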